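/- arXiv:1507.03536 — 3 statements merged into one kernel-verified Lean document; each statement's English description precedes it below -/
import Mathlib

section
/- For every p > 2 there exists a constant C > 0, depending only on p and α, such that for all entire functions g, ψ on ℂ and every w ∈ ℂ, ∫_ℂ |k_w(ψ(ζ))|^p Q_g(ζ)^p dm(ζ) ≤ C ( ∫_ℂ |k_w(ψ(ζ))|² Q_g(ζ)² dm(ζ) )^{p/2}. -/
open MeasureTheory Complex Metric Real Set
open scoped ENNReal

/-- Normalized reproducing kernel of the Fock space `F_α²`:
`k_w(u) = exp(α u w̄ − (α/2)|w|²)`. -/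
noncomputable def fockK (α : ℝ) (w u : ℂ) : ℂ :=
  Complex.exp (α * u * (starRingEnd ℂ) w - (α / 2 : ℝ) * (‖w‖ : ℂ) ^ 2)

/-- `Q_g(z) = |g(z)| e^{−(α/2)|z|²} (1+|z|)^{−1}`. -/
noncomputable def Qfun (α : ℝ) (g : ℂ → ℂ) (z : ℂ) : ℝ :=
  ‖g z‖ * Real.exp (-(α / 2) * ‖z‖ ^ 2) / (1 + ‖z‖)

lemma circle_submean (G : ℂ → ℂ) (hG : Differentiable ℂ G) (z : ℂ) {r : ℝ} (hr : 0 < r) :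
    2 * π * ‖G z‖ ≤ ∫ θ in (0:ℝ)..(2*π), ‖G (circleMap z r θ)‖ := by
  have hC : (∮ u in C(z, r), (u - z)⁻¹ • G u) = (2 * ↑π * I : ℂ) • G z :=
    (hG.differentiableOn : DifferentiableOn ℂ G (closedBall z r)).circleIntegral_sub_inv_smul
      (mem_ball_self hr)
  have h1 : ‖(2 * ↑π * I : ℂ) • G z‖ = 2 * π * ‖G z‖ := by
    rw [norm_smul]
    simp [Real.pi_pos.le, mul_assoc]
  rw [← h1, ← hC]
  have h2 : ‖∮ u in C(z, r), (u - z)⁻¹ • G u‖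
      ≤ ∫ θ in (0:ℝ)..(2*π), ‖deriv (circleMap z r) θ • (circleMap z r θ - z)⁻¹ • G (circleMap z r θ)‖ :=
    intervalIntegral.norm_integral_le_integral_norm Real.two_pi_pos.le
  refine h2.trans_eq (intervalIntegral.integral_congr fun θ _ => ?_)
  rw [norm_smul, norm_smul, deriv_circleMap, circleMap_sub_center]
  have : ‖circleMap 0 r θ‖ = r := by simp [abs_of_pos hr]
  simp only [norm_mul, norm_inv, this, Complex.norm_I, mul_one]
  field_simp

lemma polar_symm_eq (p : ℝ × ℝ) : Complex.polarCoord.symm p = circleMap 0 p.1 p.2 := by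
  simp [circleMap, Complex.exp_mul_I]

lemma area_submean0 (G : ℂ → ℂ) (hG : Differentiable ℂ G) :
    π * ‖G 0‖ ≤ ∫ ζ in ball (0:ℂ) 1, ‖G ζ‖ := by
  have key := Complex.integral_comp_polarCoord_symm
    (Set.indicator (ball (0:ℂ) 1) (fun ζ => ‖G ζ‖))
  rw [integral_indicator measurableSet_ball] at key
  rw [← key]
  set box : Set (ℝ × ℝ) := Set.Ioo (0:ℝ) 1 ×ˢ Set.Ioo (-π) π with hbox
  have hGc : Continuous fun p : ℝ × ℝ => p.1 * ‖G (circleMap 0 p.1 p.2)‖ := by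
    apply continuous_fst.mul
    apply (hG.continuous.norm).comp
    unfold circleMap
    fun_prop
  have hcong : ∫ p in polarCoord.target, p.1 • Set.indicator (ball (0:ℂ) 1)
        (fun ζ => ‖G ζ‖) (Complex.polarCoord.symm p)
      = ∫ p in box, p.1 * ‖G (circleMap 0 p.1 p.2)‖ := by
    have h1 : ∀ p ∈ polarCoord.target,
        p.1 • Set.indicator (ball (0:ℂ) 1) (fun ζ => ‖G ζ‖) (Complex.polarCoord.symm p)
        = Set.indicator box (fun p : ℝ × ℝ => p.1 * ‖G (circleMap 0 p.1 p.2)‖) p := by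
      rintro ⟨x, y⟩ ⟨hx, hy⟩
      simp only [Set.mem_Ioi] at hx
      have habs : Complex.polarCoord.symm (x, y) ∈ ball (0:ℂ) 1 ↔ x < 1 := by
        rw [mem_ball_zero_iff, Complex.norm_polarCoord_symm,
          abs_of_pos hx]
      by_cases hx1 : x < 1
      · rw [Set.indicator_of_mem (habs.mpr hx1), Set.indicator_of_mem
          (by exact ⟨⟨hx, hx1⟩, hy⟩), polar_symm_eq]
        simp [smul_eq_mul]
      · rw [Set.indicator_of_notMem (fun h => hx1 (habs.mp h)), Set.indicator_of_notMem
          (fun h => hx1 h.1.2), smul_zero]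
    rw [setIntegral_congr_fun polarCoord.open_target.measurableSet h1,
      setIntegral_indicator (by measurability)]
    congr 1
    rw [Set.inter_eq_self_of_subset_right]
    rintro ⟨x, y⟩ ⟨hx, hy⟩
    exact ⟨hx.1, hy⟩
  rw [hcong]
  -- integrability on the box
  have hint : IntegrableOn (fun p : ℝ × ℝ => p.1 * ‖G (circleMap 0 p.1 p.2)‖) box := by
    apply (hGc.locallyIntegrable.integrableOn_isCompact
      ((isCompact_Icc).prod (isCompact_Icc) : IsCompact (Set.Icc (0:ℝ) 1 ×ˢ Set.Icc (-π) π))).mono_set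
    exact Set.prod_mono Set.Ioo_subset_Icc_self Set.Ioo_subset_Icc_self
  have hprod : ∫ p in box, p.1 * ‖G (circleMap 0 p.1 p.2)‖
      = ∫ x in Set.Ioo (0:ℝ) 1, ∫ y in Set.Ioo (-π) π, x * ‖G (circleMap 0 x y)‖ := by
    rw [hbox, Measure.volume_eq_prod] at *
    exact setIntegral_prod _ hint
  rw [hprod]
  -- inner integral bound
  have inner_bound : ∀ x ∈ Set.Ioo (0:ℝ) 1,
      2 * π * ‖G 0‖ * x ≤ ∫ y in Set.Ioo (-π) π, x * ‖G (circleMap 0 x y)‖ := by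
    intro x hx
    have hper : Function.Periodic (fun θ => ‖G (circleMap 0 x θ)‖) (2*π) :=
      fun θ => by simp [periodic_circleMap 0 x θ]
    have h1 : ∫ y in Set.Ioo (-π) π, x * ‖G (circleMap 0 x y)‖
        = x * ∫ y in (-π)..π, ‖G (circleMap 0 x y)‖ := by
      rw [intervalIntegral.integral_of_le (by linarith [Real.pi_pos]),
        ← integral_Ioc_eq_integral_Ioo, integral_const_mul]
    have h2 : ∫ y in (-π)..π, ‖G (circleMap 0 x y)‖
        = ∫ y in (0:ℝ)..(2*π), ‖G (circleMap 0 x y)‖ := by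
      have := hper.intervalIntegral_add_eq (-π) 0
      simpa [show -π + 2*π = π by ring, zero_add] using this
    rw [h1, h2]
    have := circle_submean G hG 0 hx.1
    calc 2 * π * ‖G 0‖ * x = x * (2 * π * ‖G 0‖) := by ring
    _ ≤ x * ∫ y in (0:ℝ)..(2*π), ‖G (circleMap 0 x y)‖ :=
      mul_le_mul_of_nonneg_left this hx.1.le
  -- outer
  have houter : IntegrableOn (fun x => ∫ y in Set.Ioo (-π) π, x * ‖G (circleMap 0 x y)‖)
      (Set.Ioo (0:ℝ) 1) := by
    have hint2 : Integrable (fun p : ℝ × ℝ => p.1 * ‖G (circleMap 0 p.1 p.2)‖)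
        ((volume.restrict (Set.Ioo (0:ℝ) 1)).prod (volume.restrict (Set.Ioo (-π) π))) := by
      rw [Measure.prod_restrict]
      rw [hbox, Measure.volume_eq_prod] at hint
      exact hint
    exact hint2.integral_prod_left
  have step : ∫ x in Set.Ioo (0:ℝ) 1, 2 * π * ‖G 0‖ * x
      ≤ ∫ x in Set.Ioo (0:ℝ) 1, ∫ y in Set.Ioo (-π) π, x * ‖G (circleMap 0 x y)‖ := by
    apply setIntegral_mono_on _ houter measurableSet_Ioo inner_bound
    exact ((continuous_const.mul continuous_id).integrableOn_Icc (a := (0:ℝ)) (b := 1)).mono_set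
      Set.Ioo_subset_Icc_self
  refine le_trans ?_ step
  have : ∫ x in Set.Ioo (0:ℝ) 1, 2 * π * ‖G 0‖ * x
      = 2 * π * ‖G 0‖ * ∫ x in Set.Ioo (0:ℝ) 1, x := by rw [integral_const_mul]
  rw [this, ← integral_Ioc_eq_integral_Ioo, ← intervalIntegral.integral_of_le zero_le_one]
  simp [integral_id]
  ring_nf
  rfl

lemma area_submean (G : ℂ → ℂ) (hG : Differentiable ℂ G) (z : ℂ) :
    π * ‖G z‖ ≤ ∫ ζ in ball z 1, ‖G ζ‖ := by
  have h0 := area_submean0 (fun ζ => G (ζ + z)) (hG.comp (differentiable_id.add_const z))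
  simp only [zero_add] at h0
  refine h0.trans_eq ?_
  rw [← integral_indicator measurableSet_ball, ← integral_indicator measurableSet_ball]
  rw [← integral_add_right_eq_self
    (fun ζ => Set.indicator (ball z 1) (fun ζ => ‖G ζ‖) ζ) z]
  apply integral_congr_ae
  filter_upwards with ζ
  have hmem : ζ + z ∈ ball z 1 ↔ ζ ∈ ball (0:ℂ) 1 := by
    simp [mem_ball, Complex.dist_eq]
  by_cases hb : ζ ∈ ball (0:ℂ) 1
  · rw [Set.indicator_of_mem (hmem.mpr hb), Set.indicator_of_mem hb]
  · rw [Set.indicator_of_notMem (fun hc => hb (hmem.mp hc)), Set.indicator_of_notMem hb]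

lemma fock_pointwise (α : ℝ) (hα : 0 < α) (h : ℂ → ℂ) (hh : Differentiable ℂ h) (z : ℂ) :
    π * (‖h z‖ * Real.exp (-(α/2) * ‖z‖ ^ 2) / (1 + ‖z‖)) ^ 2
      ≤ 4 * Real.exp α * ∫ ζ in ball z 1,
        (‖h ζ‖ * Real.exp (-(α/2) * ‖ζ‖ ^ 2) / (1 + ‖ζ‖)) ^ 2 := by
  set u : ℂ → ℝ := fun ζ =>
    (‖h ζ‖ * Real.exp (-(α/2) * ‖ζ‖ ^ 2) / (1 + ‖ζ‖)) ^ 2 with hu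
  have hupos : ∀ ζ, 0 ≤ u ζ := fun ζ => sq_nonneg _
  have huc : Continuous u := by
    apply Continuous.pow
    apply Continuous.div
    · exact (continuous_norm.comp hh.continuous).mul
        (Real.continuous_exp.comp (continuous_const.mul (continuous_norm.pow 2)))
    · exact continuous_const.add continuous_norm
    · intro ζ; positivity
  set G : ℂ → ℂ := fun ζ =>
    (h ζ)^2 * Complex.exp ((α:ℂ) * (((‖z‖ : ℝ) : ℂ)^2 - 2 * ζ * (starRingEnd ℂ) z)) with hG
  have hGd : Differentiable ℂ G := by
    apply (hh.pow 2).mul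
    apply Complex.differentiable_exp.comp
    fun_prop
  have hnormG : ∀ ζ, ‖G ζ‖
      = ‖h ζ‖^2 * Real.exp (α * (‖z‖^2 - 2*(ζ * (starRingEnd ℂ) z).re)) := by
    intro ζ
    rw [hG]
    simp only [norm_mul, norm_pow, Complex.norm_exp]
    congr 2
    have : ((α:ℂ) * (((‖z‖ : ℝ) : ℂ)^2 - 2 * ζ * (starRingEnd ℂ) z)).re
        = α * (‖z‖^2 - 2*(ζ * (starRingEnd ℂ) z).re) := by
      simp only [Complex.mul_re, Complex.mul_im, Complex.sub_re, Complex.sub_im,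
        ← Complex.ofReal_pow, Complex.ofReal_re, Complex.ofReal_im,
        Complex.re_ofNat, Complex.im_ofNat]
      ring
    rw [this]
  -- |ζ - z|² identity
  have habs2 : ∀ ζ : ℂ, ‖ζ - z‖^2
      = ‖ζ‖^2 - 2*(ζ * (starRingEnd ℂ) z).re + ‖z‖^2 := by
    intro ζ
    rw [Complex.sq_norm, Complex.sq_norm, Complex.sq_norm]
    simp only [Complex.normSq_apply, Complex.mul_re, Complex.sub_re, Complex.sub_im,
      Complex.conj_re, Complex.conj_im]
    ring
  have hGz : ‖G z‖ = u z * (1 + ‖z‖)^2 := by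
    rw [hnormG]
    simp only [hu]
    have h1 : ‖z‖ ^2 - 2*(z * (starRingEnd ℂ) z).re = -(‖z‖^2) := by
      have := habs2 z
      simp only [sub_self, norm_zero] at this
      nlinarith [this]
    rw [h1]
    have hz1 : (0:ℝ) < 1 + ‖z‖ := by positivity
    rw [div_pow, div_mul_cancel₀ _ (by positivity : ((1:ℝ) + ‖z‖)^2 ≠ 0), mul_pow]
    congr 1
    rw [← Real.exp_nat_mul]
    congr 1
    push_cast
    ring
  have hGb : ∀ ζ ∈ ball z 1, ‖G ζ‖ ≤ Real.exp α * (4 * (1 + ‖z‖)^2) * u ζ := by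
    intro ζ hζ
    rw [hnormG]
    have hd : ‖ζ - z‖ < 1 := by
      rwa [mem_ball, Complex.dist_eq] at hζ
    have hre : α * (‖z‖^2 - 2*(ζ * (starRingEnd ℂ) z).re)
        ≤ α + (-α * ‖ζ‖^2) := by
      have h2 := habs2 ζ
      have h3 : ‖ζ - z‖^2 ≤ 1 := by nlinarith [norm_nonneg (ζ - z)]
      nlinarith
    have step1 : ‖h ζ‖^2 * Real.exp (α * (‖z‖^2 - 2*(ζ * (starRingEnd ℂ) z).re))
        ≤ ‖h ζ‖^2 * (Real.exp α * Real.exp (-α * ‖ζ‖^2)) := by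
      rw [← Real.exp_add]
      exact mul_le_mul_of_nonneg_left (Real.exp_le_exp.mpr hre) (by positivity)
    refine step1.trans ?_
    -- now bound  |h ζ|² e^{-α|ζ|²} ≤ 4(1+|z|)² u ζ
    have h1ζ : (0:ℝ) < 1 + ‖ζ‖ := by positivity
    have huζ : u ζ * (1 + ‖ζ‖)^2 = ‖h ζ‖^2 * Real.exp (-α * ‖ζ‖^2) := by
      simp only [hu]
      rw [div_pow, div_mul_cancel₀ _ (by positivity : ((1:ℝ) + ‖ζ‖)^2 ≠ 0), mul_pow]
      congr 1
      rw [← Real.exp_nat_mul]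
      congr 1
      push_cast
      ring
    have hcmp : (1 + ‖ζ‖)^2 ≤ (2 * (1 + ‖z‖))^2 := by
      have : ‖ζ‖ ≤ ‖z‖ + 1 := by
        have h4 : ‖ζ‖ - ‖z‖ ≤ ‖ζ - z‖ := by
          simpa using norm_sub_norm_le ζ z
        linarith
      nlinarith [norm_nonneg ζ, norm_nonneg z]
    calc ‖h ζ‖^2 * (Real.exp α * Real.exp (-α * ‖ζ‖^2))
        = Real.exp α * (u ζ * (1 + ‖ζ‖)^2) := by rw [huζ]; ring
      _ ≤ Real.exp α * (u ζ * (2 * (1 + ‖z‖))^2) := by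
          exact mul_le_mul_of_nonneg_left (mul_le_mul_of_nonneg_left hcmp (hupos ζ)) (Real.exp_nonneg α)
      _ = Real.exp α * (4 * (1 + ‖z‖)^2) * u ζ := by ring
  have hsub := area_submean G hGd z
  have hintu : IntegrableOn u (ball z 1) :=
    huc.locallyIntegrable.integrableOn_isCompact (isCompact_closedBall z 1)
      |>.mono_set ball_subset_closedBall
  have hmono : ∫ ζ in ball z 1, ‖G ζ‖
      ≤ ∫ ζ in ball z 1, Real.exp α * (4 * (1 + ‖z‖)^2) * u ζ := by
    apply setIntegral_mono_on _ ((hintu.const_mul _)) measurableSet_ball hGb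
    exact hGd.continuous.norm.locallyIntegrable.integrableOn_isCompact (isCompact_closedBall z 1)
      |>.mono_set ball_subset_closedBall
  have hfinal : π * (u z * (1 + ‖z‖)^2)
      ≤ Real.exp α * (4 * (1 + ‖z‖)^2) * ∫ ζ in ball z 1, u ζ := by
    rw [← hGz, ← integral_const_mul]
    exact hsub.trans hmono
  have hz1 : (0:ℝ) < (1 + ‖z‖)^2 := by positivity
  have h5 : (π * u z) * (1 + ‖z‖)^2
      ≤ (4 * Real.exp α * ∫ ζ in ball z 1, u ζ) * (1 + ‖z‖)^2 := by
    have e1 : (π * u z) * (1 + ‖z‖)^2 = π * (u z * (1 + ‖z‖)^2) := by ring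
    have e2 : (4 * Real.exp α * ∫ ζ in ball z 1, u ζ) * (1 + ‖z‖)^2
        = Real.exp α * (4 * (1 + ‖z‖)^2) * ∫ ζ in ball z 1, u ζ := by ring
    rw [e1, e2]; exact hfinal
  exact (mul_le_mul_iff_of_pos_right hz1).mp h5

theorem p_integral_le_square_integral (α : ℝ) (hα : 0 < α) (p : ℝ) (hp : 2 < p) :
    ∃ C : ℝ, 0 < C ∧ ∀ g ψ : ℂ → ℂ,
      Differentiable ℂ g → Differentiable ℂ ψ → ∀ w : ℂ,
      (∫⁻ ζ : ℂ, ENNReal.ofReal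
          (‖fockK α w (ψ ζ)‖ ^ p * Qfun α g ζ ^ p)) ≤
        ENNReal.ofReal C *
          (∫⁻ ζ : ℂ, ENNReal.ofReal
              (‖fockK α w (ψ ζ)‖ ^ 2 * Qfun α g ζ ^ 2)) ^ (p / 2) := by
  set C₂ : ℝ := 4 * Real.exp α / π with hC₂
  have hC₂pos : 0 < C₂ := by
    apply div_pos (by positivity) Real.pi_pos
  refine ⟨C₂ ^ ((p - 2)/2), Real.rpow_pos_of_pos hC₂pos _, ?_⟩
  intro g ψ hg hψ w
  set h : ℂ → ℂ := fun ζ => fockK α w (ψ ζ) * g ζ with hh_def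
  have hh : Differentiable ℂ h := by
    apply Differentiable.mul _ hg
    apply Complex.differentiable_exp.comp
    apply Differentiable.sub _ (differentiable_const _)
    exact (differentiable_const (α:ℂ)).mul hψ |>.mul (differentiable_const _)
  set φ : ℂ → ℝ := fun ζ =>
    (‖h ζ‖ * Real.exp (-(α/2) * ‖ζ‖ ^ 2) / (1 + ‖ζ‖)) ^ 2 with hφ
  have hφ_nonneg : ∀ ζ, 0 ≤ φ ζ := fun ζ => sq_nonneg _
  have hQ_nonneg : ∀ ζ, 0 ≤ Qfun α g ζ := fun ζ => by
    unfold Qfun; positivity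
  have hinteg_eq : ∀ ζ, ‖fockK α w (ψ ζ)‖ ^ 2 * Qfun α g ζ ^ 2 = φ ζ := by
    intro ζ
    simp only [hφ, hh_def, Qfun, norm_mul]
    rw [div_pow, div_pow, mul_pow, mul_pow, mul_pow]
    ring
  have hφc : Continuous φ := by
    apply Continuous.pow
    apply Continuous.div
    · exact (continuous_norm.comp hh.continuous).mul
        (Real.continuous_exp.comp (continuous_const.mul (continuous_norm.pow 2)))
    · exact continuous_const.add continuous_norm
    · intro ζ; positivity
  simp_rw [hinteg_eq]
  set J : ℝ≥0∞ := ∫⁻ ζ : ℂ, ENNReal.ofReal (φ ζ) with hJ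
  by_cases hJtop : J = ⊤
  · rw [hJtop, ENNReal.top_rpow_of_pos (by linarith : 0 < p/2), ENNReal.mul_top
      (by simpa using (Real.rpow_pos_of_pos hC₂pos ((p-2)/2)) : ENNReal.ofReal (C₂ ^ ((p-2)/2)) ≠ 0)]
    exact le_top
  -- pointwise bound : φ z ≤ C₂ * J.toReal
  have hφM : ∀ z : ℂ, φ z ≤ C₂ * J.toReal := by
    intro z
    have h1 := fock_pointwise α hα h hh z
    have h2 : ∫ ζ in ball z 1, φ ζ ≤ J.toReal := by
      have he : ∫ ζ in ball z 1, φ ζ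
          = (∫⁻ ζ in ball z 1, ENNReal.ofReal (φ ζ)).toReal := by
        rw [integral_eq_lintegral_of_nonneg_ae (ae_of_all _ hφ_nonneg)
          hφc.aestronglyMeasurable.restrict]
      rw [he]
      exact ENNReal.toReal_mono hJtop (setLIntegral_le_lintegral _ _)
    have h3 : π * φ z ≤ 4 * Real.exp α * J.toReal := by
      refine h1.trans ?_
      exact mul_le_mul_of_nonneg_left h2 (by positivity)
    rw [hC₂, div_mul_eq_mul_div, le_div_iff₀ Real.pi_pos]
    linarith
  set M : ℝ := C₂ * J.toReal with hM
  have hM_nonneg : 0 ≤ M := mul_nonneg hC₂pos.le ENNReal.toReal_nonneg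
  -- pointwise p bound
  have hpoint : ∀ ζ : ℂ, ‖fockK α w (ψ ζ)‖ ^ p * Qfun α g ζ ^ p
      ≤ M ^ ((p-2)/2) * φ ζ := by
    intro ζ
    set F : ℝ := ‖fockK α w (ψ ζ)‖ * Qfun α g ζ with hF
    have hF_nonneg : 0 ≤ F := mul_nonneg (norm_nonneg _) (hQ_nonneg ζ)
    have hFp : ‖fockK α w (ψ ζ)‖ ^ p * Qfun α g ζ ^ p = F ^ p :=
      (Real.mul_rpow (norm_nonneg _) (hQ_nonneg ζ)).symm
    have hF2 : F ^ (2:ℕ) = φ ζ := by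
      rw [hF, ← hinteg_eq ζ]; ring
    rw [hFp]
    have hFeq : F ^ p = φ ζ ^ (p/2) := by
      rw [← hF2, ← Real.rpow_natCast F 2, ← Real.rpow_mul hF_nonneg]
      norm_num
      rw [show (2:ℝ)*(p/2) = p by ring]
    rw [hFeq]
    rcases eq_or_lt_of_le (hφ_nonneg ζ) with h0 | h0
    · rw [← h0, Real.zero_rpow (by positivity : (p/2) ≠ 0), mul_zero]
    · have hsplit : φ ζ ^ (p/2) = φ ζ ^ ((p-2)/2) * φ ζ := by
        rw [show p/2 = (p-2)/2 + 1 by ring, Real.rpow_add h0, Real.rpow_one]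
      rw [hsplit]
      exact mul_le_mul_of_nonneg_right
        (Real.rpow_le_rpow (hφ_nonneg ζ) (hφM ζ) (by linarith)) (hφ_nonneg ζ)
  -- integrate the pointwise bound
  calc (∫⁻ ζ : ℂ, ENNReal.ofReal (‖fockK α w (ψ ζ)‖ ^ p * Qfun α g ζ ^ p))
      ≤ ∫⁻ ζ : ℂ, ENNReal.ofReal (M ^ ((p-2)/2) * φ ζ) :=
        lintegral_mono fun ζ => ENNReal.ofReal_le_ofReal (hpoint ζ)
    _ = ENNReal.ofReal (M ^ ((p-2)/2)) * J := by
        simp_rw [ENNReal.ofReal_mul (Real.rpow_nonneg hM_nonneg _)]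
        rw [lintegral_const_mul' _ _ ENNReal.ofReal_ne_top, hJ]
    _ = ENNReal.ofReal (C₂ ^ ((p-2)/2)) * J ^ (p/2) := by
        have e1 : ENNReal.ofReal (M ^ ((p-2)/2)) = (ENNReal.ofReal M) ^ ((p-2)/2) :=
          (ENNReal.ofReal_rpow_of_nonneg hM_nonneg (by linarith : (0:ℝ) ≤ (p-2)/2)).symm
        have e2 : ENNReal.ofReal M = ENNReal.ofReal C₂ * J := by
          rw [hM, ENNReal.ofReal_mul hC₂pos.le, ENNReal.ofReal_toReal hJtop]
        rw [e1, e2, ENNReal.mul_rpow_of_nonneg _ _ (by linarith : (0:ℝ) ≤ (p-2)/2)]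
        rw [ENNReal.ofReal_rpow_of_nonneg hC₂pos.le (by linarith : (0:ℝ) ≤ (p-2)/2)]
        rw [mul_assoc]
        congr 1
        rcases eq_or_ne J 0 with hJ0 | hJ0
        · rw [hJ0, ENNReal.zero_rpow_of_pos (by linarith), mul_zero,
            ENNReal.zero_rpow_of_pos (by linarith)]
        · nth_rewrite 2 [← ENNReal.rpow_one J]
          rw [← ENNReal.rpow_add _ _ hJ0 hJtop, show (p-2)/2 + 1 = p/2 by ring]
end

section
/- Let α > 0, let g be an entire function on ℂ that is not identically zero, and let ψ : ℂ → ℂ be a polynomial. If sup_{z ∈ ℂ} (|g(z)ψ(z)| / (1+|z|)) e^{(α/2)(|ψ(z)|² − |z|²)} < ∞, then there exist a, b ∈ ℂ with |a| ≤ 1 such that ψ(z) = a z + b for all z ∈ ℂ. -/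
open Complex

/-- Liouville-type lemma: an entire function that is eventually small at infinity is zero. -/
theorem aux_entire_zero (g : ℂ → ℂ) (hg : Differentiable ℂ g)
    (h : ∀ ε : ℝ, 0 < ε → ∃ R : ℝ, ∀ z : ℂ, R ≤ ‖z‖ → ‖g z‖ ≤ ε) :
    ∀ z : ℂ, g z = 0 := by
  obtain ⟨R1, hR1⟩ := h 1 one_pos
  have hbd : Bornology.IsBounded (Set.range g) := by
    have hsub : Set.range g ⊆ g '' (Metric.closedBall 0 |R1|) ∪ Metric.closedBall 0 1 := by
      rintro _ ⟨z, rfl⟩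
      by_cases hz : ‖z‖ ≤ |R1|
      · exact Set.mem_union_left _ ⟨z, by simpa [Complex.dist_eq] using hz, rfl⟩
      · refine Set.mem_union_right _ ?_
        simp only [Metric.mem_closedBall, Complex.dist_eq, sub_zero]
        exact hR1 z ((le_abs_self R1).trans (le_of_not_ge hz))
    exact (((isCompact_closedBall (0:ℂ) |R1|).image hg.continuous).isBounded.union
      Metric.isBounded_closedBall).subset hsub
  have hconst : ∀ z : ℂ, g z = g 0 := fun z => hg.apply_eq_apply_of_bounded hbd z 0
  have h0 : ‖g 0‖ = 0 := by
    by_contra habs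
    have hpos : 0 < ‖g 0‖ := lt_of_le_of_ne (norm_nonneg _) (Ne.symm habs)
    obtain ⟨R, hR⟩ := h (‖g 0‖ / 2) (half_pos hpos)
    have hz : ‖((|R| + 1 : ℝ) : ℂ)‖ = |R| + 1 := by
      rw [Complex.norm_real, Real.norm_eq_abs]
      exact abs_of_nonneg (by positivity)
    have := hR ((|R| + 1 : ℝ) : ℂ) (by rw [hz]; linarith [le_abs_self R])
    rw [hconst (((|R| + 1 : ℝ)) : ℂ)] at this
    linarith
  intro z
  rw [hconst z]
  exact norm_eq_zero.mp h0

/-- Lower bound for a polynomial of degree at least 2. -/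
theorem poly_lower (P : Polynomial ℂ) (hd : 2 ≤ P.natDegree) :
    ∃ R : ℝ, 1 ≤ R ∧ ∀ z : ℂ, R ≤ ‖z‖ →
      2 * ‖z‖ ≤ ‖P.eval z‖ := by
  have hP0 : P ≠ 0 := Polynomial.ne_zero_of_natDegree_gt (show 0 < P.natDegree by omega)
  set d := P.natDegree with hdd
  have hc0 : 0 < ‖P.coeff d‖ := by
    rw [norm_pos_iff]
    have := Polynomial.leadingCoeff_ne_zero.mpr hP0
    rwa [Polynomial.leadingCoeff] at this
  set c := ‖P.coeff d‖ with hcc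
  set K := ∑ i ∈ Finset.range d, ‖P.coeff i‖ with hK
  refine ⟨max 1 ((K + 2) / c), le_max_left _ _, fun z hz => ?_⟩
  set r := ‖z‖ with hr
  have hr1 : 1 ≤ r := le_trans (le_max_left _ _) hz
  have hcr : K + 2 ≤ c * r := by
    have := le_trans (le_max_right 1 ((K + 2) / c)) hz
    calc K + 2 = ((K + 2) / c) * c := by field_simp
    _ ≤ r * c := by nlinarith
    _ = c * r := mul_comm _ _
  have heval : P.eval z = (∑ i ∈ Finset.range d, P.coeff i * z ^ i) + P.coeff d * z ^ d := by
    rw [Polynomial.eval_eq_sum_range, Finset.sum_range_succ]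
  set S := ∑ i ∈ Finset.range d, P.coeff i * z ^ i with hS
  have hSbound : ‖S‖ ≤ K * r ^ (d - 1) := by
    calc ‖S‖ ≤ ∑ i ∈ Finset.range d, ‖P.coeff i * z ^ i‖ :=
          norm_sum_le _ _
    _ = ∑ i ∈ Finset.range d, ‖P.coeff i‖ * r ^ i := by
          simp [norm_mul, norm_pow, hr]
    _ ≤ ∑ i ∈ Finset.range d, ‖P.coeff i‖ * r ^ (d - 1) := by
          refine Finset.sum_le_sum fun i hi => ?_
          have hi' : i ≤ d - 1 := Nat.le_sub_one_of_lt (Finset.mem_range.mp hi)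
          exact mul_le_mul_of_nonneg_left (pow_le_pow_right₀ hr1 hi') (norm_nonneg _)
    _ = K * r ^ (d - 1) := by rw [← Finset.sum_mul]
  have hlead : ‖P.coeff d * z ^ d‖ = c * r ^ d := by
    simp [norm_mul, norm_pow, hr, hcc]
  have hd1 : d = (d - 1) + 1 := (Nat.succ_pred_eq_of_pos (by omega)).symm
  have hrd : r ≤ r ^ (d - 1) := by
    calc r = r ^ 1 := (pow_one r).symm
    _ ≤ r ^ (d - 1) := pow_le_pow_right₀ hr1 (by omega)
  have hkey : c * r ^ d - K * r ^ (d - 1) ≤ ‖P.eval z‖ := by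
    have h1 : c * r ^ d = ‖(S + P.coeff d * z ^ d) - S‖ := by
      rw [add_sub_cancel_left, hlead]
    have h2 : ‖(S + P.coeff d * z ^ d) - S‖ ≤
        ‖S + P.coeff d * z ^ d‖ + ‖S‖ := by
      simpa using norm_sub_le (S + P.coeff d * z ^ d) S
    rw [heval]
    calc c * r ^ d - K * r ^ (d - 1) ≤ c * r ^ d - ‖S‖ := by linarith
    _ ≤ ‖S + P.coeff d * z ^ d‖ := by rw [h1] at *; linarith [h2]
  have hfin : 2 * r ≤ c * r ^ d - K * r ^ (d - 1) := by
    have hrd' : r ^ d = r ^ (d - 1) * r := by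
      conv_lhs => rw [hd1]
      rw [pow_succ]
    have hpow : c * r ^ d - K * r ^ (d - 1) = r ^ (d - 1) * (c * r - K) := by
      rw [hrd']; ring
    rw [hpow]
    have h2cr : 2 ≤ c * r - K := by linarith
    have hrpos : (0:ℝ) < r := lt_of_lt_of_le one_pos hr1
    calc 2 * r ≤ (c * r - K) * r := by nlinarith
    _ ≤ (c * r - K) * r ^ (d - 1) := by nlinarith
    _ = r ^ (d - 1) * (c * r - K) := mul_comm _ _
  linarith

/-- key contradiction lemma -/
theorem key_zero (α : ℝ) (hα : 0 < α) (g ψ : ℂ → ℂ) (hg : Differentiable ℂ g)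
    (M : ℝ)
    (hM : ∀ z : ℂ, ‖g z * ψ z‖ / (1 + ‖z‖) *
        Real.exp (α / 2 * (‖ψ z‖ ^ 2 - ‖z‖ ^ 2)) ≤ M)
    (ε C R : ℝ) (hε : 0 < ε)
    (hlow : ∀ z : ℂ, R ≤ ‖z‖ → 1 ≤ ‖ψ z‖ ∧
      ε * ‖z‖ ^ 2 - C * ‖z‖ ≤ ‖ψ z‖ ^ 2 - ‖z‖ ^ 2) :
    ∀ z : ℂ, g z = 0 := by
  have hM0 : 0 ≤ M := le_trans (by positivity) (hM 0)
  -- the dominating function tends to 0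
  have htend : Filter.Tendsto (fun r : ℝ => M * (1 + r) * Real.exp (-(α/2 * (ε * r^2 - C * r))))
      Filter.atTop (nhds 0) := by
    have h1 : Filter.Tendsto (fun r : ℝ => M * (1 + r) * Real.exp (-r)) Filter.atTop (nhds 0) := by
      have : (fun r : ℝ => M * (1 + r) * Real.exp (-r)) =
          fun r => M * Real.exp (-r) + M * (r ^ 1 * Real.exp (-r)) := by
        funext r; ring
      rw [this]
      have := (Real.tendsto_exp_neg_atTop_nhds_zero.const_mul M).add
        ((Real.tendsto_pow_mul_exp_neg_atTop_nhds_zero 1).const_mul M)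
      simpa using this
    refine squeeze_zero' ?_ ?_ h1
    · filter_upwards [Filter.eventually_ge_atTop (0:ℝ)] with r hr
      positivity
    · filter_upwards [Filter.eventually_ge_atTop (max 1 ((α * C + 2) / (α * ε)))] with r hr
      have hr1 : 1 ≤ r := le_trans (le_max_left _ _) hr
      have hr2 : (α * C + 2) / (α * ε) ≤ r := le_trans (le_max_right _ _) hr
      have hexp : -(α/2 * (ε * r^2 - C * r)) ≤ -r := by
        have hαε : 0 < α * ε := mul_pos hα hε
        have h3 : α * C + 2 ≤ α * ε * r := by
          rw [div_le_iff₀ hαε] at hr2; linarith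
        nlinarith [mul_nonneg (by linarith : (0:ℝ) ≤ α * ε * r - α * C - 2)
          (by linarith : (0:ℝ) ≤ r)]
      exact mul_le_mul_of_nonneg_left (Real.exp_le_exp.mpr hexp) (by positivity)
  apply aux_entire_zero g hg
  intro δ hδ
  rw [Metric.tendsto_atTop] at htend
  obtain ⟨R', hR'⟩ := htend δ hδ
  refine ⟨max R R', fun z hz => ?_⟩
  set r := ‖z‖ with hr
  have hzR : R ≤ r := le_trans (le_max_left _ _) hz
  have hzR' : R' ≤ r := le_trans (le_max_right _ _) hz
  obtain ⟨hψ1, hψ2⟩ := hlow z hzR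
  have hr0 : (0:ℝ) ≤ r := norm_nonneg _
  -- from hM: abs (g z * ψ z) ≤ M * (1 + r) * exp (-(α/2)*(...))
  have hprod : ‖g z * ψ z‖ ≤
      M * (1 + r) * Real.exp (-(α/2 * (‖ψ z‖^2 - r^2))) := by
    have h := hM z
    have h1r : (0:ℝ) < 1 + r := by linarith
    have hexp : (0:ℝ) < Real.exp (α / 2 * (‖ψ z‖ ^ 2 - r ^ 2)) := Real.exp_pos _
    have h2 : ‖g z * ψ z‖ * Real.exp (α / 2 * (‖ψ z‖ ^ 2 - r ^ 2)) ≤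
        M * (1 + r) := by
      have h3 := mul_le_mul_of_nonneg_right h (le_of_lt h1r)
      calc ‖g z * ψ z‖ * Real.exp (α / 2 * (‖ψ z‖ ^ 2 - r ^ 2))
          = ‖g z * ψ z‖ / (1 + r) *
            Real.exp (α / 2 * (‖ψ z‖ ^ 2 - r ^ 2)) * (1 + r) := by
            field_simp
      _ ≤ M * (1 + r) := h3
    rw [Real.exp_neg, ← div_eq_mul_inv, le_div_iff₀ hexp]
    exact h2
  have hg_le : ‖g z‖ ≤ ‖g z * ψ z‖ := by
    rw [norm_mul]
    nth_rewrite 1 [← mul_one (‖g z‖)]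
    exact mul_le_mul_of_nonneg_left hψ1 (norm_nonneg _)
  have hmono : Real.exp (-(α/2 * (‖ψ z‖^2 - r^2))) ≤
      Real.exp (-(α/2 * (ε * r^2 - C * r))) := by
    apply Real.exp_le_exp.mpr
    have : α / 2 * (ε * r ^ 2 - C * r) ≤ α / 2 * (‖ψ z‖ ^ 2 - r ^ 2) :=
      mul_le_mul_of_nonneg_left hψ2 (by positivity)
    linarith
  have hfr := hR' r hzR'
  rw [Real.dist_eq, sub_zero] at hfr
  have habs : M * (1 + r) * Real.exp (-(α/2 * (ε * r^2 - C * r))) < δ :=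
    lt_of_abs_lt hfr
  calc ‖g z‖ ≤ M * (1 + r) * Real.exp (-(α/2 * (‖ψ z‖^2 - r^2))) :=
        le_trans hg_le hprod
  _ ≤ M * (1 + r) * Real.exp (-(α/2 * (ε * r^2 - C * r))) := by
        apply mul_le_mul_of_nonneg_left hmono (by positivity)
  _ ≤ δ := le_of_lt habs

theorem psi_linear_of_sup_finite (α : ℝ) (hα : 0 < α) (g ψ : ℂ → ℂ)
    (hg : Differentiable ℂ g) (hg0 : ∃ z : ℂ, g z ≠ 0)
    (hψ : ∃ P : Polynomial ℂ, ∀ z : ℂ, ψ z = P.eval z)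
    (hsup : ∃ M : ℝ, ∀ z : ℂ,
      ‖g z * ψ z‖ / (1 + ‖z‖) *
        Real.exp (α / 2 * (‖ψ z‖ ^ 2 - ‖z‖ ^ 2)) ≤ M) :
    ∃ a b : ℂ, ‖a‖ ≤ 1 ∧ ∀ z : ℂ, ψ z = a * z + b := by
  obtain ⟨P, hP⟩ := hψ
  obtain ⟨M, hM⟩ := hsup
  obtain ⟨z0, hz0⟩ := hg0
  by_cases h2 : 2 ≤ P.natDegree
  · exfalso
    obtain ⟨R, hR1, hR⟩ := poly_lower P h2
    apply hz0
    refine key_zero α hα g ψ hg M hM 1 0 R one_pos (fun z hz => ?_) z0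
    have h1 := hR z hz
    rw [← hP z] at h1
    have hrz : 1 ≤ ‖z‖ := le_trans hR1 hz
    constructor
    · linarith
    · have h0 : (0:ℝ) ≤ ‖z‖ := norm_nonneg _
      nlinarith
  · push_neg at h2
    have hdeg : P.natDegree < 2 := h2
    set a := P.coeff 1 with ha
    set b := P.coeff 0 with hb
    have hlin : ∀ z : ℂ, ψ z = a * z + b := by
      intro z
      rw [hP z, Polynomial.eval_eq_sum_range' hdeg]
      simp [Finset.sum_range_succ]
      ring
    by_cases hA : ‖a‖ ≤ 1
    · exact ⟨a, b, hA, hlin⟩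
    · exfalso
      push_neg at hA
      apply hz0
      set A := ‖a‖ with hAa
      set B := ‖b‖ with hBb
      refine key_zero α hα g ψ hg M hM (A^2 - 1) (2 * A * B) ((B + 1) / A)
        (by nlinarith) (fun z hz => ?_) z0
      set r := ‖z‖ with hr
      have hr0 : (0:ℝ) ≤ r := norm_nonneg _
      have hA0 : (0:ℝ) < A := lt_trans one_pos hA
      have hAr : B + 1 ≤ A * r := by
        rw [div_le_iff₀ hA0] at hz; linarith [hz]
      have hψz : A * r - B ≤ ‖ψ z‖ := by
        rw [hlin z]
        have : ‖a * z‖ ≤ ‖a * z + b‖ + ‖b‖ := by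
          calc ‖a * z‖ = ‖(a * z + b) - b‖ := by ring_nf
          _ ≤ ‖a * z + b‖ + ‖b‖ := by
              simpa using norm_sub_le (a * z + b) b
        rw [norm_mul] at this
        linarith
      have hψpos : (0:ℝ) ≤ A * r - B := by linarith
      constructor
      · linarith
      · have hsq : (A * r - B)^2 ≤ ‖ψ z‖^2 := by
          apply sq_le_sq' <;> nlinarith [norm_nonneg (ψ z)]
        nlinarith [hsq, sq_nonneg B]
end

section
/- For every 0 < p < ∞ there exist constants c, C > 0, depending only on p and α, such that for all entire functions g, ψ on ℂ, c · J ≤ ∫_ℂ ∫_ℂ |w|^p |k_w(ψ(ζ))|^p Q_g(ζ)^p dm(ζ) dm(w) ≤ C · J, where J = ∫_ℂ |g(ζ)|^p (1+|ψ(ζ)|)^p (1+|ζ|)^{−p} e^{(pα/2)(|ψ(ζ)|² − |ζ|²)} dm(ζ). -/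
open MeasureTheory Complex
open scoped ENNReal

open Metric

lemma abs_fockK (α : ℝ) (w u : ℂ) :
    ‖fockK α w u‖ =
      Real.exp (α * (u * (starRingEnd ℂ) w).re - α / 2 * ‖w‖ ^ 2) := by
  rw [fockK, Complex.norm_exp]
  congr 1
  simp [Complex.sub_re, Complex.mul_re, Complex.ofReal_re, Complex.ofReal_im,
    ← Complex.ofReal_pow, Complex.sq_norm, Complex.normSq_apply]
  ring

lemma exponent_eq (α p : ℝ) (w u : ℂ) :
    (α * (u * (starRingEnd ℂ) w).re - α / 2 * ‖w‖ ^ 2) * p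
      = p * α / 2 * ‖u‖ ^ 2 + -(p * α / 2) * ‖w - u‖ ^ 2 := by
  simp only [Complex.sq_norm, Complex.normSq_apply, Complex.mul_re, Complex.conj_re,
    Complex.conj_im, Complex.sub_re, Complex.sub_im]
  ring

lemma abs_fockK_rpow (α p : ℝ) (w u : ℂ) :
    ‖fockK α w u‖ ^ p =
      Real.exp (p * α / 2 * ‖u‖ ^ 2) *
        Real.exp (-(p * α / 2) * ‖w - u‖ ^ 2) := by
  rw [abs_fockK, ← Real.exp_mul, exponent_eq, Real.exp_add]

lemma inner_eq (α p : ℝ) (u : ℂ) :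
    ∫⁻ w : ℂ, ENNReal.ofReal (‖w‖ ^ p * ‖fockK α w u‖ ^ p)
      = ENNReal.ofReal (Real.exp (p * α / 2 * ‖u‖ ^ 2)) *
        ∫⁻ v : ℂ, ENNReal.ofReal
          (‖v + u‖ ^ p * Real.exp (-(p * α / 2) * ‖v‖ ^ 2)) := by
  rw [← lintegral_const_mul' _ _ ENNReal.ofReal_ne_top,
    ← lintegral_add_right_eq_self
      (fun w => ENNReal.ofReal (‖w‖ ^ p * ‖fockK α w u‖ ^ p)) u]
  refine lintegral_congr fun v => ?_
  simp only [abs_fockK_rpow, add_sub_cancel_right]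
  rw [← ENNReal.ofReal_mul (Real.exp_nonneg _)]
  congr 1
  ring

lemma phi_upper {p : ℝ} (hp : 0 < p) (β : ℝ) (u : ℂ) :
    ∫⁻ v : ℂ, ENNReal.ofReal (‖v + u‖ ^ p * Real.exp (-β * ‖v‖ ^ 2))
      ≤ ENNReal.ofReal ((1 + ‖u‖) ^ p) *
        ∫⁻ v : ℂ, ENNReal.ofReal ((1 + ‖v‖) ^ p * Real.exp (-β * ‖v‖ ^ 2)) := by
  rw [← lintegral_const_mul' _ _ ENNReal.ofReal_ne_top]
  refine lintegral_mono fun v => ?_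
  rw [← ENNReal.ofReal_mul (by positivity)]
  apply ENNReal.ofReal_le_ofReal
  rw [← mul_assoc, ← Real.mul_rpow (by positivity) (by positivity)]
  have h1 : ‖v + u‖ ≤ (1 + ‖u‖) * (1 + ‖v‖) := by
    have := norm_add_le v u
    have h2 := norm_nonneg v
    have h3 := norm_nonneg u
    nlinarith
  gcongr


lemma phi_lower {p β : ℝ} (hp : 0 < p) (hβ : 0 < β) (u : ℂ) :
    ENNReal.ofReal ((1 + ‖u‖) ^ p) *
        (ENNReal.ofReal (Real.exp (-β * 9)) * volume (closedBall (0 : ℂ) 1))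
      ≤ ∫⁻ v : ℂ, ENNReal.ofReal
          (‖v + u‖ ^ p * Real.exp (-β * ‖v‖ ^ 2)) := by
  set ν : ℂ := if u = 0 then 1 else (‖u‖ : ℂ)⁻¹ * u with hν
  have habs : ‖ν‖ = 1 := by
    rw [hν]
    split_ifs with h
    · simp
    · simp [norm_mul, norm_inv, Complex.norm_real, _root_.abs_of_nonneg (norm_nonneg u),
        inv_mul_cancel₀ ((norm_ne_zero_iff.mpr h))]
  have hu : u = (‖u‖ : ℂ) * ν := by
    rw [hν]
    split_ifs with h
    · simp [h]
    · rw [← mul_assoc, mul_inv_cancel₀ (by simpa using (norm_ne_zero_iff.mpr h)), one_mul]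
  have key : ∀ v ∈ closedBall (2 * ν) 1,
      ENNReal.ofReal ((1 + ‖u‖) ^ p * Real.exp (-β * 9))
        ≤ ENNReal.ofReal (‖v + u‖ ^ p * Real.exp (-β * ‖v‖ ^ 2)) := by
    intro v hv
    rw [mem_closedBall, dist_eq] at hv
    have e1 : ‖2 * ν + u‖ = ‖u‖ + 2 := by
      conv_lhs => rw [hu]
      have : 2 * ν + (‖u‖ : ℂ) * ν = ((2 + (‖u‖ : ℝ) : ℝ) : ℂ) * ν := by
        push_cast; ring
      rw [this, norm_mul, habs, Complex.norm_real, Real.norm_eq_abs, mul_one, _root_.abs_of_nonneg (by positivity)]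
      ring
    have t : ‖2 * ν + u‖ ≤ ‖2 * ν - v‖ + ‖v + u‖ := by
      calc ‖2 * ν + u‖ = ‖(2 * ν - v) + (v + u)‖ := by ring_nf
        _ ≤ _ := norm_add_le _ _
    have hv' : ‖2 * ν - v‖ ≤ 1 := by rwa [norm_sub_rev] at hv
    have h1 : 1 + ‖u‖ ≤ ‖v + u‖ := by linarith
    have h2 : ‖v‖ ≤ 3 := by
      have := norm_add_le (v - 2 * ν) (2 * ν)
      have h3 : ‖2 * ν‖ = 2 := by
        rw [norm_mul, habs, mul_one]; simp
      simp only [sub_add_cancel] at this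
      linarith
    apply ENNReal.ofReal_le_ofReal
    have hrp : (1 + ‖u‖) ^ p ≤ ‖v + u‖ ^ p :=
      Real.rpow_le_rpow (by positivity) h1 hp.le
    have hex : Real.exp (-β * 9) ≤ Real.exp (-β * ‖v‖ ^ 2) := by
      apply Real.exp_le_exp.2
      have h9 : ‖v‖ ^ 2 ≤ 9 := by nlinarith [norm_nonneg v]
      nlinarith [mul_le_mul_of_nonneg_left h9 hβ.le]
    exact mul_le_mul hrp hex (Real.exp_pos _).le (by positivity)
  have hmeas : Measurable fun v : ℂ => ENNReal.ofReal
      (‖v + u‖ ^ p * Real.exp (-β * ‖v‖ ^ 2)) := by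
    apply ENNReal.measurable_ofReal.comp
    apply Measurable.mul
    · exact (Real.continuous_rpow_const hp.le).measurable.comp
        (continuous_norm.measurable.comp (measurable_id.add_const u))
    · exact (Real.continuous_exp.measurable).comp
        ((measurable_const.mul ((continuous_norm.measurable).pow_const 2)))
  calc ENNReal.ofReal ((1 + ‖u‖) ^ p) *
        (ENNReal.ofReal (Real.exp (-β * 9)) * volume (closedBall (0 : ℂ) 1))
      = ENNReal.ofReal ((1 + ‖u‖) ^ p * Real.exp (-β * 9)) *
          volume (closedBall (2 * ν) 1) := by
        rw [show volume (closedBall (0:ℂ) 1) = volume (closedBall (2*ν) 1) from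
            (Measure.addHaar_closedBall_center volume (2*ν) 1).symm,
          ENNReal.ofReal_mul (by positivity), mul_assoc]
    _ = ∫⁻ _ in closedBall (2 * ν) 1, ENNReal.ofReal
          ((1 + ‖u‖) ^ p * Real.exp (-β * 9)) := by
        rw [setLIntegral_const]
    _ ≤ ∫⁻ v in closedBall (2 * ν) 1, ENNReal.ofReal
          (‖v + u‖ ^ p * Real.exp (-β * ‖v‖ ^ 2)) :=
        setLIntegral_mono hmeas key
    _ ≤ _ := setLIntegral_le_lintegral _ _

lemma weight_bound {p β : ℝ} (hp : 0 < p) (hβ : 0 < β) (t : ℝ) (ht : 0 ≤ t) :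
    (1 + t) ^ p * Real.exp (-β * t ^ 2)
      ≤ Real.exp ((p + 3) ^ 2 / (4 * β)) * (1 + t) ^ (-3:ℝ) := by
  have h1t : (0:ℝ) < 1 + t := by linarith
  have hpow : (1+t) ^ (p+3) ≤ Real.exp ((p+3)*t) := by
    have h := Real.add_one_le_exp t
    calc (1+t) ^ (p+3) ≤ (Real.exp t) ^ (p+3) :=
          Real.rpow_le_rpow h1t.le (by linarith) (by linarith)
      _ = Real.exp (t*(p+3)) := (Real.exp_mul t (p+3)).symm
      _ = Real.exp ((p+3)*t) := by ring_nf
  have hqexp : Real.exp ((p+3)*t) * Real.exp (-β*t^2) ≤ Real.exp ((p+3)^2/(4*β)) := by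
    rw [← Real.exp_add]
    apply Real.exp_le_exp.2
    rw [le_div_iff₀ (by positivity)]
    nlinarith [sq_nonneg (2*β*t - (p+3))]
  have hsplit : (1+t) ^ p = (1+t) ^ (p+3) * (1+t) ^ (-3:ℝ) := by
    rw [← Real.rpow_add h1t]; norm_num
  calc (1+t) ^ p * Real.exp (-β * t^2)
      = ((1+t) ^ (p+3) * Real.exp (-β*t^2)) * (1+t) ^ (-3:ℝ) := by rw [hsplit]; ring
    _ ≤ Real.exp ((p+3)^2/(4*β)) * (1+t) ^ (-3:ℝ) := by
        apply mul_le_mul_of_nonneg_right _ (Real.rpow_nonneg h1t.le _)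
        exact le_trans (mul_le_mul_of_nonneg_right hpow (Real.exp_nonneg _)) hqexp

lemma C0_fin {p β : ℝ} (hp : 0 < p) (hβ : 0 < β) :
    ∫⁻ v : ℂ, ENNReal.ofReal ((1 + ‖v‖) ^ p * Real.exp (-β * ‖v‖ ^ 2)) < ⊤ := by
  have hint : Integrable (fun v : ℂ => (1 + ‖v‖) ^ (-3:ℝ)) :=
    integrable_one_add_norm (E := ℂ) (r := 3) (by rw [Complex.finrank_real_complex]; norm_num)
  have hfin : ∫⁻ v : ℂ, ENNReal.ofReal ((1 + ‖v‖) ^ (-3:ℝ)) < ⊤ := by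
    have := hint.hasFiniteIntegral
    rwa [hasFiniteIntegral_iff_ofReal (ae_of_all _ fun v => by positivity)] at this
  calc ∫⁻ v : ℂ, ENNReal.ofReal ((1 + ‖v‖) ^ p * Real.exp (-β * ‖v‖ ^ 2))
      ≤ ∫⁻ v : ℂ, ENNReal.ofReal (Real.exp ((p + 3) ^ 2 / (4 * β)) * (1 + ‖v‖) ^ (-3:ℝ)) := by
        refine lintegral_mono fun v => ENNReal.ofReal_le_ofReal ?_
        have := weight_bound hp hβ (‖v‖) (norm_nonneg v)
        exact this
    _ = ENNReal.ofReal (Real.exp ((p + 3) ^ 2 / (4 * β))) *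
          ∫⁻ v : ℂ, ENNReal.ofReal ((1 + ‖v‖) ^ (-3:ℝ)) := by
        simp_rw [ENNReal.ofReal_mul (Real.exp_nonneg _)]
        exact lintegral_const_mul' _ _ ENNReal.ofReal_ne_top
    _ < ⊤ := ENNReal.mul_lt_top ENNReal.ofReal_lt_top hfin

lemma Jint_eq (α : ℝ) {p : ℝ} (hp : 0 < p) (g ψ : ℂ → ℂ) (ζ : ℂ) :
    ‖g ζ‖ ^ p * (1 + ‖ψ ζ‖) ^ p / (1 + ‖ζ‖) ^ p *
        Real.exp (p * α / 2 * (‖ψ ζ‖ ^ 2 - ‖ζ‖ ^ 2))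
      = Real.exp (p * α / 2 * ‖ψ ζ‖ ^ 2) *
          ((1 + ‖ψ ζ‖) ^ p * Qfun α g ζ ^ p) := by
  have h1 : (0:ℝ) < 1 + ‖ζ‖ := by positivity
  have hQ : Qfun α g ζ ^ p
      = ‖g ζ‖ ^ p * (Real.exp (p * α / 2 * ‖ζ‖ ^ 2))⁻¹ /
          (1 + ‖ζ‖) ^ p := by
    rw [Qfun, Real.div_rpow (by positivity) h1.le,
      Real.mul_rpow (norm_nonneg _) (Real.exp_pos _).le, ← Real.exp_mul]
    have e : -(α / 2) * ‖ζ‖ ^ 2 * p = -(p * α / 2 * ‖ζ‖ ^ 2) := by ring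
    rw [e, Real.exp_neg]
  rw [hQ, mul_sub, Real.exp_sub]
  have h2 : (0:ℝ) < (1 + ‖ζ‖) ^ p := by positivity
  have h3 : (0:ℝ) < Real.exp (p * α / 2 * ‖ζ‖ ^ 2) := Real.exp_pos _
  field_simp

lemma enn_low {cE E P Q Φ : ℝ≥0∞} (h : P * cE ≤ Φ) :
    cE * (E * (P * Q)) ≤ E * Φ * Q := by
  calc cE * (E * (P * Q)) = P * cE * (E * Q) := by ring
    _ ≤ Φ * (E * Q) := mul_le_mul_left h _
    _ = E * Φ * Q := by ring

lemma enn_up {K E P Q Φ : ℝ≥0∞} (h : Φ ≤ P * K) :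
    E * Φ * Q ≤ K * (E * (P * Q)) := by
  calc E * Φ * Q = Φ * (E * Q) := by ring
    _ ≤ P * K * (E * Q) := mul_le_mul_left h _
    _ = K * (E * (P * Q)) := by ring

theorem double_integral_two_sided_estimate (α : ℝ) (hα : 0 < α) (p : ℝ) (hp : 0 < p) :
    ∃ c C : ℝ, 0 < c ∧ 0 < C ∧ ∀ g ψ : ℂ → ℂ,
      Differentiable ℂ g → Differentiable ℂ ψ →
      (ENNReal.ofReal c *
          ∫⁻ ζ : ℂ, ENNReal.ofReal
            (‖g ζ‖ ^ p * (1 + ‖ψ ζ‖) ^ p /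
              (1 + ‖ζ‖) ^ p *
                Real.exp (p * α / 2 *
                  (‖ψ ζ‖ ^ 2 - ‖ζ‖ ^ 2)))) ≤
        (∫⁻ w : ℂ, ∫⁻ ζ : ℂ, ENNReal.ofReal
            (‖w‖ ^ p * ‖fockK α w (ψ ζ)‖ ^ p *
              Qfun α g ζ ^ p)) ∧
      (∫⁻ w : ℂ, ∫⁻ ζ : ℂ, ENNReal.ofReal
          (‖w‖ ^ p * ‖fockK α w (ψ ζ)‖ ^ p *
            Qfun α g ζ ^ p)) ≤
        ENNReal.ofReal C *
          ∫⁻ ζ : ℂ, ENNReal.ofReal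
            (‖g ζ‖ ^ p * (1 + ‖ψ ζ‖) ^ p /
              (1 + ‖ζ‖) ^ p *
                Real.exp (p * α / 2 *
                  (‖ψ ζ‖ ^ 2 - ‖ζ‖ ^ 2))) := by
  have hβ : 0 < p * α / 2 := by positivity
  have hvol : volume (closedBall (0:ℂ) 1) ≠ ⊤ := measure_closedBall_lt_top.ne
  have hKfin := C0_fin (β := p * α / 2) hp hβ
  have hcE : ENNReal.ofReal (Real.exp (-(p * α / 2) * 9)) *
      volume (closedBall (0:ℂ) 1) ≠ ⊤ :=
    ENNReal.mul_ne_top ENNReal.ofReal_ne_top hvol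
  refine ⟨Real.exp (-(p * α / 2) * 9) * (volume (closedBall (0:ℂ) 1)).toReal,
    (∫⁻ v : ℂ, ENNReal.ofReal ((1 + ‖v‖) ^ p *
      Real.exp (-(p * α / 2) * ‖v‖ ^ 2))).toReal + 1, ?_, ?_, ?_⟩
  · have h1 : (0:ℝ) < (volume (closedBall (0:ℂ) 1)).toReal :=
      ENNReal.toReal_pos (measure_closedBall_pos volume _ one_pos).ne' hvol
    positivity
  · positivity
  intro g ψ hg hψ
  -- measurability for Tonelli
  have hgc : Continuous g := hg.continuous
  have hψc : Continuous ψ := hψ.continuous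
  have hrpC : Continuous fun x : ℝ => x ^ p := Real.continuous_rpow_const hp.le
  have hfkC : Continuous fun q : ℂ × ℂ => fockK α q.1 (ψ q.2) := by
    unfold fockK
    apply Complex.continuous_exp.comp
    apply Continuous.sub
    · exact (continuous_const.mul (hψc.comp continuous_snd)).mul
        (continuous_star.comp continuous_fst)
    · exact continuous_const.mul
        ((Complex.continuous_ofReal.comp (continuous_norm.comp continuous_fst)).pow 2)
  have hQC : Continuous fun z : ℂ => Qfun α g z := by
    unfold Qfun
    apply Continuous.div
    · exact (continuous_norm.comp hgc).mul
        (Real.continuous_exp.comp (continuous_const.mul (continuous_norm.pow 2)))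
    · exact continuous_const.add continuous_norm
    · intro z; positivity
  have hFC : Continuous (fun q : ℂ × ℂ => ENNReal.ofReal
      (‖q.1‖ ^ p * ‖fockK α q.1 (ψ q.2)‖ ^ p * Qfun α g q.2 ^ p)) := by
    apply ENNReal.continuous_ofReal.comp
    exact ((hrpC.comp (continuous_norm.comp continuous_fst)).mul
      (hrpC.comp (continuous_norm.comp hfkC))).mul
      (hrpC.comp (hQC.comp continuous_snd))
  have hswap : (∫⁻ w : ℂ, ∫⁻ ζ : ℂ, ENNReal.ofReal
        (‖w‖ ^ p * ‖fockK α w (ψ ζ)‖ ^ p * Qfun α g ζ ^ p))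
      = ∫⁻ ζ : ℂ, ∫⁻ w : ℂ, ENNReal.ofReal
        (‖w‖ ^ p * ‖fockK α w (ψ ζ)‖ ^ p * Qfun α g ζ ^ p) :=
    lintegral_lintegral_swap hFC.measurable.aemeasurable
  -- inner integral identity
  have hinner : ∀ ζ : ℂ, (∫⁻ w : ℂ, ENNReal.ofReal
        (‖w‖ ^ p * ‖fockK α w (ψ ζ)‖ ^ p * Qfun α g ζ ^ p))
      = ENNReal.ofReal (Real.exp (p * α / 2 * ‖ψ ζ‖ ^ 2)) *
          (∫⁻ v : ℂ, ENNReal.ofReal (‖v + ψ ζ‖ ^ p *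
            Real.exp (-(p * α / 2) * ‖v‖ ^ 2))) *
          ENNReal.ofReal (Qfun α g ζ ^ p) := by
    intro ζ
    have h1 : ∀ w : ℂ, ENNReal.ofReal
        (‖w‖ ^ p * ‖fockK α w (ψ ζ)‖ ^ p * Qfun α g ζ ^ p)
      = ENNReal.ofReal (‖w‖ ^ p * ‖fockK α w (ψ ζ)‖ ^ p) *
          ENNReal.ofReal (Qfun α g ζ ^ p) := fun w => ENNReal.ofReal_mul (by positivity)
    rw [lintegral_congr h1, lintegral_mul_const' _ _ ENNReal.ofReal_ne_top, inner_eq]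
  -- J integrand identity
  have hJ : ∀ ζ : ℂ, ENNReal.ofReal
      (‖g ζ‖ ^ p * (1 + ‖ψ ζ‖) ^ p / (1 + ‖ζ‖) ^ p *
        Real.exp (p * α / 2 * (‖ψ ζ‖ ^ 2 - ‖ζ‖ ^ 2)))
      = ENNReal.ofReal (Real.exp (p * α / 2 * ‖ψ ζ‖ ^ 2)) *
          (ENNReal.ofReal ((1 + ‖ψ ζ‖) ^ p) *
            ENNReal.ofReal (Qfun α g ζ ^ p)) := by
    intro ζ
    rw [Jint_eq α hp g ψ ζ, ENNReal.ofReal_mul (Real.exp_nonneg _),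
      ENNReal.ofReal_mul (by positivity)]
  constructor
  · -- lower bound
    calc ENNReal.ofReal (Real.exp (-(p * α / 2) * 9) *
            (volume (closedBall (0:ℂ) 1)).toReal) *
          ∫⁻ ζ : ℂ, ENNReal.ofReal
            (‖g ζ‖ ^ p * (1 + ‖ψ ζ‖) ^ p /
              (1 + ‖ζ‖) ^ p *
                Real.exp (p * α / 2 * (‖ψ ζ‖ ^ 2 - ‖ζ‖ ^ 2)))
        = (ENNReal.ofReal (Real.exp (-(p * α / 2) * 9)) * volume (closedBall (0:ℂ) 1)) *
          ∫⁻ ζ : ℂ, ENNReal.ofReal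
            (‖g ζ‖ ^ p * (1 + ‖ψ ζ‖) ^ p /
              (1 + ‖ζ‖) ^ p *
                Real.exp (p * α / 2 * (‖ψ ζ‖ ^ 2 - ‖ζ‖ ^ 2))) := by
          rw [ENNReal.ofReal_mul (Real.exp_nonneg _), ENNReal.ofReal_toReal hvol]
      _ = ∫⁻ ζ : ℂ, (ENNReal.ofReal (Real.exp (-(p * α / 2) * 9)) *
            volume (closedBall (0:ℂ) 1)) * ENNReal.ofReal
            (‖g ζ‖ ^ p * (1 + ‖ψ ζ‖) ^ p /
              (1 + ‖ζ‖) ^ p *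
                Real.exp (p * α / 2 * (‖ψ ζ‖ ^ 2 - ‖ζ‖ ^ 2))) :=
          (lintegral_const_mul' _ _ hcE).symm
      _ ≤ ∫⁻ ζ : ℂ, ∫⁻ w : ℂ, ENNReal.ofReal
            (‖w‖ ^ p * ‖fockK α w (ψ ζ)‖ ^ p * Qfun α g ζ ^ p) := by
          refine lintegral_mono fun ζ => ?_
          rw [hJ ζ, hinner ζ]
          exact enn_low (phi_lower hp hβ (ψ ζ))
      _ = _ := hswap.symm
  · -- upper bound
    calc (∫⁻ w : ℂ, ∫⁻ ζ : ℂ, ENNReal.ofReal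
            (‖w‖ ^ p * ‖fockK α w (ψ ζ)‖ ^ p * Qfun α g ζ ^ p))
        = ∫⁻ ζ : ℂ, ∫⁻ w : ℂ, ENNReal.ofReal
            (‖w‖ ^ p * ‖fockK α w (ψ ζ)‖ ^ p * Qfun α g ζ ^ p) := hswap
      _ ≤ ∫⁻ ζ : ℂ, (∫⁻ v : ℂ, ENNReal.ofReal ((1 + ‖v‖) ^ p *
            Real.exp (-(p * α / 2) * ‖v‖ ^ 2))) * ENNReal.ofReal
            (‖g ζ‖ ^ p * (1 + ‖ψ ζ‖) ^ p /
              (1 + ‖ζ‖) ^ p *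
                Real.exp (p * α / 2 * (‖ψ ζ‖ ^ 2 - ‖ζ‖ ^ 2))) := by
          refine lintegral_mono fun ζ => ?_
          rw [hJ ζ, hinner ζ]
          exact enn_up (phi_upper hp _ (ψ ζ))
      _ = (∫⁻ v : ℂ, ENNReal.ofReal ((1 + ‖v‖) ^ p *
            Real.exp (-(p * α / 2) * ‖v‖ ^ 2))) *
          ∫⁻ ζ : ℂ, ENNReal.ofReal
            (‖g ζ‖ ^ p * (1 + ‖ψ ζ‖) ^ p /
              (1 + ‖ζ‖) ^ p *
                Real.exp (p * α / 2 * (‖ψ ζ‖ ^ 2 - ‖ζ‖ ^ 2))) :=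
          lintegral_const_mul' _ _ hKfin.ne
      _ ≤ _ := by
          refine mul_le_mul_left ?_ _
          calc (∫⁻ v : ℂ, ENNReal.ofReal ((1 + ‖v‖) ^ p *
                Real.exp (-(p * α / 2) * ‖v‖ ^ 2)))
              = ENNReal.ofReal ((∫⁻ v : ℂ, ENNReal.ofReal ((1 + ‖v‖) ^ p *
                  Real.exp (-(p * α / 2) * ‖v‖ ^ 2))).toReal) :=
                (ENNReal.ofReal_toReal hKfin.ne).symm
            _ ≤ _ := ENNReal.ofReal_le_ofReal (by linarith)
end
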